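/- arXiv:2203.16821 — 2 statements merged into one kernel-verified Lean document; each statement's English description precedes it below -/
import Mathlib

section
/- (Main theorem, necessary and sufficient condition.) Let W : ℂ → ℂ be complex differentiable at s₀ = σ₀ + i·t₀ (σ₀, t₀ ∈ ℝ), with W(s₀) ≠ 0. Choose c ∈ {1, i} such that c·W(s₀) lies in the slit plane {z : 0 < Re z ∨ Im z ≠ 0} (such a c always exists since W(s₀) ≠ 0). Then W′(s₀) = 0 if and only if both partial derivatives of the argument function of c·W vanish at (σ₀,t₀), i.e. the derivative of σ ↦ arg(c·W(σ + i·t₀)) at σ₀ is 0 and the derivative of t ↦ arg(c·W(σ₀ + i·t)) at t₀ is 0. -/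
open Complex

theorem main_theorem_deriv_zero_iff_arg_partials_zero (W : ℂ → ℂ) (σ₀ t₀ : ℝ)
    (hW : DifferentiableAt ℂ W (σ₀ + t₀ * I))
    (hne : W (σ₀ + t₀ * I) ≠ 0)
    (c : ℂ) (hc : c ∈ ({1, I} : Set ℂ))
    (hslit : c * W (σ₀ + t₀ * I) ∈ Complex.slitPlane) :
    deriv W (σ₀ + t₀ * I) = 0 ↔
    (deriv (fun σ : ℝ => Complex.arg (c * W (σ + t₀ * I))) σ₀ = 0 ∧
     deriv (fun t : ℝ => Complex.arg (c * W (σ₀ + t * I))) t₀ = 0) := by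
  set s₀ : ℂ := (σ₀ : ℂ) + t₀ * I with hs₀
  have hcne : c ≠ 0 := by
    rcases hc with h | h
    · simp [h]
    · simp only [Set.mem_singleton_iff] at h
      simp [h, I_ne_zero]
  have hfne : c * W s₀ ≠ 0 := mul_ne_zero hcne hne
  set L : ℂ := c * deriv W s₀ / (c * W s₀) with hL
  have hf : HasDerivAt (fun s => c * W s) (c * deriv W s₀) s₀ :=
    hW.hasDerivAt.const_mul c
  have hlog : HasDerivAt (fun s => Complex.log (c * W s)) L s₀ := hf.clog hslit
  -- σ-direction
  have h1 : HasDerivAt (fun σ : ℝ => (σ : ℂ) + t₀ * I) 1 σ₀ := by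
    simpa using (Complex.ofRealCLM.hasDerivAt (x := σ₀)).add_const (t₀ * I)
  have hσ : HasDerivAt (fun σ : ℝ => Complex.log (c * W ((σ : ℂ) + t₀ * I))) L σ₀ := by
    have := HasDerivAt.scomp (𝕜 := ℝ) (𝕜' := ℂ) σ₀ (by simpa [hs₀] using hlog) h1
    simpa [Function.comp_def] using this
  have hσim : HasDerivAt (fun σ : ℝ => Complex.arg (c * W ((σ : ℂ) + t₀ * I))) L.im σ₀ := by
    have := Complex.imCLM.hasFDerivAt.comp_hasDerivAt σ₀ hσ
    simpa [Function.comp_def, Complex.imCLM_apply, Complex.log_im] using this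
  -- t-direction
  have h2 : HasDerivAt (fun t : ℝ => (σ₀ : ℂ) + (t : ℂ) * I) I t₀ := by
    simpa using ((Complex.ofRealCLM.hasDerivAt (x := t₀)).mul_const I).const_add (σ₀ : ℂ)
  have ht : HasDerivAt (fun t : ℝ => Complex.log (c * W ((σ₀ : ℂ) + (t : ℂ) * I))) (I * L) t₀ := by
    have := HasDerivAt.scomp (𝕜 := ℝ) (𝕜' := ℂ) t₀ (by simpa [hs₀] using hlog) h2
    simpa [smul_eq_mul, Function.comp_def] using this
  have htim : HasDerivAt (fun t : ℝ => Complex.arg (c * W ((σ₀ : ℂ) + (t : ℂ) * I))) L.re t₀ := by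
    have := Complex.imCLM.hasFDerivAt.comp_hasDerivAt t₀ ht
    simpa [Function.comp_def, Complex.imCLM_apply, Complex.log_im, Complex.mul_im, Complex.I_re, Complex.I_im] using this
  rw [hσim.deriv, htim.deriv]
  constructor
  · intro h
    have : L = 0 := by simp [hL, h]
    simp [this]
  · rintro ⟨h1', h2'⟩
    have hL0 : L = 0 := Complex.ext h2' h1'
    rw [hL] at hL0
    have : c * deriv W s₀ = 0 := by
      rcases div_eq_zero_iff.mp hL0 with h | h
      · exact h
      · exact absurd h hfne
    exact (mul_eq_zero.mp this).resolve_left hcne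
end

section
/- Let s ∈ ℂ with Im s ≠ 0 (so s is not on the real axis). Then s is not a zero of the derivative of the Gamma function: deriv Γ(s) ≠ 0, where Γ is the complex Gamma function. -/
open Filter Finset Topology

namespace DGNZ

noncomputable def ell (n : ℕ) (z : ℂ) : ℂ :=
  z * Real.log n - Complex.log z - ∑ k ∈ Finset.range n, Complex.log (1 + z / (k + 1))

noncomputable def ell' (n : ℕ) (z : ℂ) : ℂ :=
  (Real.log n : ℂ) - z⁻¹ - ∑ k ∈ Finset.range n, (z + (k + 1))⁻¹

noncomputable def glim' (z : ℂ) : ℂ :=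
  -(Real.eulerMascheroniConstant : ℂ) + (-z⁻¹ + ∑' k : ℕ, z / ((k + 1) * (z + (k + 1))))

noncomputable def glim (z : ℂ) : ℂ :=
  -Complex.log z + (∑' k : ℕ, (z / (k + 1) - Complex.log (1 + z / (k + 1))))
    - z * (Real.eulerMascheroniConstant : ℂ)

variable {z : ℂ}

lemma ne_zero_of_im (hz : z.im ≠ 0) : z ≠ 0 := fun h => hz (by simp [h])

lemma add_nat_ne_zero (hz : z.im ≠ 0) (k : ℕ) : z + ((k : ℂ) + 1) ≠ 0 := by
  intro h
  apply hz
  have := congrArg Complex.im h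
  simpa using this

lemma one_add_div_ne_zero (hz : z.im ≠ 0) (k : ℕ) : 1 + z / ((k : ℂ) + 1) ≠ 0 := by
  have hk : ((k : ℂ) + 1) ≠ 0 := by
    exact_mod_cast Nat.cast_add_one_ne_zero (R := ℂ) k
  have h1 : 1 + z / ((k : ℂ) + 1) = (z + ((k : ℂ) + 1)) / ((k : ℂ) + 1) := by
    field_simp
    ring
  rw [h1]
  exact div_ne_zero (add_nat_ne_zero hz k) hk

lemma one_add_div_mem_slitPlane (hz : z.im ≠ 0) (k : ℕ) :
    1 + z / ((k : ℂ) + 1) ∈ Complex.slitPlane := by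
  rw [Complex.mem_slitPlane_iff]
  right
  have hk : ((k : ℂ) + 1) = ((k + 1 : ℝ) : ℂ) := by push_cast; ring
  have : (1 + z / ((k : ℂ) + 1)).im = z.im / (k + 1 : ℝ) := by
    rw [hk, Complex.add_im, Complex.div_ofReal_im]
    simp
  rw [this]
  exact div_ne_zero hz (by positivity)

lemma hasDerivAt_ell (hz : z.im ≠ 0) (n : ℕ) : HasDerivAt (ell n) (ell' n z) z := by
  have h1 : HasDerivAt (fun z : ℂ => z * (Real.log n : ℂ)) (Real.log n : ℂ) z := by
    simpa using (hasDerivAt_id z).mul_const (Real.log n : ℂ)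
  have h2 : HasDerivAt Complex.log z⁻¹ z :=
    Complex.hasDerivAt_log (Complex.mem_slitPlane_iff.mpr (Or.inr hz))
  have h3 : ∀ k ∈ Finset.range n,
      HasDerivAt (fun z : ℂ => Complex.log (1 + z / ((k : ℂ) + 1))) (z + ((k : ℂ) + 1))⁻¹ z := by
    intro k _
    have hk : ((k : ℂ) + 1) ≠ 0 := Nat.cast_add_one_ne_zero k
    have hinner : HasDerivAt (fun z : ℂ => 1 + z / ((k : ℂ) + 1)) ((k : ℂ) + 1)⁻¹ z := by
      simpa [one_div] using ((hasDerivAt_id z).div_const ((k : ℂ) + 1)).const_add (1 : ℂ)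
    have houter := Complex.hasDerivAt_log (one_add_div_mem_slitPlane hz k)
    have := houter.comp z hinner
    refine HasDerivAt.congr_deriv this ?_
    symm
    rw [← mul_inv]
    congr 1
    field_simp
    ring
  have hsum := HasDerivAt.fun_sum h3
  have := (h1.sub h2).sub hsum
  exact this

lemma key_bound {R δ : ℝ} (hδ : 0 < δ) (hδR : δ ≤ R) (hzi : δ ≤ |z.im|) (hzn : ‖z‖ ≤ R)
    (k : ℕ) : ‖z / (((k : ℂ) + 1) * (z + ((k : ℂ) + 1)))‖
      ≤ (max (2 * R) (2 * R * R / δ)) / ((k : ℝ) + 1) ^ 2 := by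
  have hR : 0 < R := lt_of_lt_of_le hδ hδR
  have hk1 : (0 : ℝ) < (k : ℝ) + 1 := by positivity
  have hnk : ‖((k : ℂ) + 1)‖ = (k : ℝ) + 1 := by
    rw [show ((k : ℂ) + 1) = ((k + 1 : ℝ) : ℂ) by push_cast; ring, Complex.norm_real,
      Real.norm_eq_abs, abs_of_pos hk1]
  have him : δ ≤ ‖z + ((k : ℂ) + 1)‖ := by
    refine le_trans ?_ (Complex.abs_im_le_norm _)
    simpa using hzi
  rw [norm_div, norm_mul, hnk]
  rcases le_or_gt ((k : ℝ) + 1) (2 * R) with hcase | hcase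
  · calc ‖z‖ / (((k : ℝ) + 1) * ‖z + ((k : ℂ) + 1)‖)
        ≤ R / (((k : ℝ) + 1) * δ) :=
          div_le_div₀ hR.le hzn (by positivity) (mul_le_mul_of_nonneg_left him hk1.le)
      _ ≤ (2 * R * R / δ) / ((k : ℝ) + 1) ^ 2 := by
          rw [div_le_div_iff₀ (by positivity) (by positivity)]
          have hδ' : 0 < δ := hδ
          rw [div_mul_eq_mul_div, le_div_iff₀ hδ']
          nlinarith [mul_le_mul_of_nonneg_right hcase
            (mul_nonneg (mul_nonneg hR.le hk1.le) hδ.le)]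
      _ ≤ (max (2 * R) (2 * R * R / δ)) / ((k : ℝ) + 1) ^ 2 :=
          div_le_div_of_nonneg_right (le_max_right _ _) (by positivity)
  · have hlow : ((k : ℝ) + 1) / 2 ≤ ‖z + ((k : ℂ) + 1)‖ := by
      have h2 := norm_sub_le (z + ((k : ℂ) + 1)) z
      rw [add_sub_cancel_left] at h2
      rw [hnk] at h2
      linarith
    calc ‖z‖ / (((k : ℝ) + 1) * ‖z + ((k : ℂ) + 1)‖)
        ≤ R / (((k : ℝ) + 1) * (((k : ℝ) + 1) / 2)) :=
          div_le_div₀ hR.le hzn (by positivity) (mul_le_mul_of_nonneg_left hlow hk1.le)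
      _ = (2 * R) / ((k : ℝ) + 1) ^ 2 := by field_simp
      _ ≤ (max (2 * R) (2 * R * R / δ)) / ((k : ℝ) + 1) ^ 2 :=
          div_le_div_of_nonneg_right (le_max_left _ _) (by positivity)

lemma summable_C_div (C : ℝ) : Summable (fun k : ℕ => C / ((k : ℝ) + 1) ^ 2) := by
  have : Summable (fun k : ℕ => ((k : ℝ) + 1) ^ 2)⁻¹ := by
    have := (summable_nat_add_iff 1).mpr (Real.summable_one_div_nat_pow.mpr one_lt_two)
    simpa [one_div, Pi.inv_def] using this
  simpa [div_eq_mul_inv] using this.mul_left C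

lemma summable_term (hz : z.im ≠ 0) :
    Summable (fun k : ℕ => z / (((k : ℂ) + 1) * (z + ((k : ℂ) + 1)))) := by
  set δ := |z.im| with hδdef
  have hδ : 0 < δ := abs_pos.mpr hz
  refine Summable.of_norm_bounded (summable_C_div (max (2 * (max ‖z‖ δ)) (2 * (max ‖z‖ δ) * (max ‖z‖ δ) / δ))) ?_
  intro k
  exact key_bound hδ (le_max_right _ _) le_rfl (le_max_left _ _) k

lemma term_eq (hz : z.im ≠ 0) (k : ℕ) :
    z / (((k : ℂ) + 1) * (z + ((k : ℂ) + 1))) = ((k : ℂ) + 1)⁻¹ - (z + ((k : ℂ) + 1))⁻¹ := by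
  have hk : ((k : ℂ) + 1) ≠ 0 := Nat.cast_add_one_ne_zero k
  have h2 := add_nat_ne_zero hz k
  field_simp
  try ring

lemma ell'_eq (hz : z.im ≠ 0) (n : ℕ) :
    ell' n z = ((Real.log n : ℂ) - ∑ k ∈ Finset.range n, ((k : ℂ) + 1)⁻¹)
      + (-z⁻¹ + ∑ k ∈ Finset.range n, z / (((k : ℂ) + 1) * (z + ((k : ℂ) + 1)))) := by
  rw [Finset.sum_congr rfl (fun k _ => term_eq hz k), Finset.sum_sub_distrib]
  unfold ell'
  ring

lemma tendstoUniformlyOn_of_const {c : ℕ → ℂ} {L : ℂ} (h : Filter.Tendsto c atTop (𝓝 L))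
    (U : Set ℂ) : TendstoUniformlyOn (fun n (_ : ℂ) => c n) (fun _ => L) atTop U := by
  rw [Metric.tendstoUniformlyOn_iff]
  intro ε hε
  filter_upwards [Metric.tendsto_nhds.mp h ε hε] with n hn x _
  simpa [dist_comm] using hn

lemma tendstoUniformlyOn_self (F : ℂ → ℂ) (U : Set ℂ) :
    TendstoUniformlyOn (fun (_ : ℕ) => F) F atTop U := by
  rw [Metric.tendstoUniformlyOn_iff]
  intro ε hε
  filter_upwards with n x _
  simp only [dist_self]
  exact hε


lemma harmonic_cast (n : ℕ) :
    ((harmonic n : ℝ) : ℂ) = ∑ k ∈ Finset.range n, ((k : ℂ) + 1)⁻¹ := by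
  rw [harmonic]
  push_cast
  rfl

lemma tendsto_log_sub_harmonic :
    Tendsto (fun n : ℕ => ((Real.log n : ℂ) - ∑ k ∈ Finset.range n, ((k : ℂ) + 1)⁻¹))
      atTop (𝓝 (-(Real.eulerMascheroniConstant : ℂ))) := by
  have h2 : Tendsto (fun n : ℕ => (Real.log n - (harmonic n : ℝ)))
      atTop (𝓝 (-Real.eulerMascheroniConstant)) := by
    have := Real.tendsto_harmonic_sub_log.neg
    simpa [neg_sub] using this
  have h3 := (Complex.continuous_ofReal.tendsto _).comp h2
  have h4 : Tendsto (fun n : ℕ => ((Real.log n - (harmonic n : ℝ) : ℝ) : ℂ))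
      atTop (𝓝 ((-Real.eulerMascheroniConstant : ℝ) : ℂ)) := h3
  rw [Complex.ofReal_neg] at h4
  exact h4.congr fun n => by rw [Complex.ofReal_sub, harmonic_cast]

lemma mem_ball_facts {s z : ℂ} (hs : s.im ≠ 0) (hzU : z ∈ Metric.ball s (|s.im| / 2)) :
    |s.im| / 2 ≤ |z.im| ∧ ‖z‖ ≤ ‖s‖ + |s.im| / 2 ∧ z.im ≠ 0 := by
  have hd : dist z s < |s.im| / 2 := Metric.mem_ball.mp hzU
  have h1 : |z.im - s.im| ≤ dist z s := by
    rw [Complex.dist_eq]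
    simpa using Complex.abs_im_le_norm (z - s)
  have h2 : |s.im| - |z.im - s.im| ≤ |z.im| := by
    have := abs_sub_abs_le_abs_sub s.im z.im
    have h3 : |s.im - z.im| = |z.im - s.im| := abs_sub_comm _ _
    linarith [abs_sub_abs_le_abs_sub s.im z.im, h3.le]
  have him : |s.im| / 2 ≤ |z.im| := by linarith
  refine ⟨him, ?_, ?_⟩
  · have hzs : ‖z - s‖ < |s.im| / 2 := by rwa [dist_eq_norm] at hd
    calc ‖z‖ = ‖s + (z - s)‖ := by congr 1; ring
      _ ≤ ‖s‖ + ‖z - s‖ := norm_add_le _ _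
      _ ≤ ‖s‖ + |s.im| / 2 := by linarith
  · intro h
    rw [h] at him
    simp only [abs_zero] at him
    have : 0 < |s.im| := abs_pos.mpr hs
    linarith

lemma tendstoUniformlyOn_ell' {s : ℂ} (hs : s.im ≠ 0) :
    TendstoUniformlyOn ell' glim' atTop (Metric.ball s (|s.im| / 2)) := by
  set δ := |s.im| / 2 with hδdef
  have hδ : 0 < δ := by
    have : 0 < |s.im| := abs_pos.mpr hs
    simp only [hδdef]; linarith
  set R := ‖s‖ + δ with hRdef
  have hδR : δ ≤ R := by
    have : 0 ≤ ‖s‖ := norm_nonneg s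
    simp only [hRdef]; linarith
  have hsum : TendstoUniformlyOn
      (fun n z => ∑ k ∈ Finset.range n, z / (((k : ℂ) + 1) * (z + ((k : ℂ) + 1))))
      (fun z => ∑' k : ℕ, z / (((k : ℂ) + 1) * (z + ((k : ℂ) + 1)))) atTop
      (Metric.ball s δ) := by
    refine tendstoUniformlyOn_tsum_nat (summable_C_div (max (2 * R) (2 * R * R / δ))) ?_
    intro k z hzU
    obtain ⟨h1, h2, _⟩ := mem_ball_facts hs hzU
    exact key_bound hδ hδR h1 h2 k
  have hA := tendstoUniformlyOn_of_const tendsto_log_sub_harmonic (Metric.ball s δ)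
  have hB := (tendstoUniformlyOn_self (fun z : ℂ => -z⁻¹) (Metric.ball s δ)).add hsum
  have hAB := hA.add hB
  refine hAB.congr ?_
  filter_upwards with n z hzU
  exact (ell'_eq (mem_ball_facts hs hzU).2.2 n).symm

lemma summable_logterm (z : ℂ) :
    Summable (fun k : ℕ => z / ((k : ℂ) + 1) - Complex.log (1 + z / ((k : ℂ) + 1))) := by
  refine Summable.of_norm_bounded_eventually_nat (g := fun k => ‖z‖ ^ 2 / ((k : ℝ) + 1) ^ 2)
    (summable_C_div _) ?_
  filter_upwards [eventually_ge_atTop ⌈2 * ‖z‖⌉₊] with k hk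
  have hk1 : (0 : ℝ) < (k : ℝ) + 1 := by positivity
  have hkz : 2 * ‖z‖ ≤ (k : ℝ) + 1 := by
    calc 2 * ‖z‖ ≤ (⌈2 * ‖z‖⌉₊ : ℝ) := Nat.le_ceil _
      _ ≤ (k : ℝ) := by exact_mod_cast hk
      _ ≤ (k : ℝ) + 1 := by linarith
  have hw : ‖z / ((k : ℂ) + 1)‖ = ‖z‖ / ((k : ℝ) + 1) := by
    rw [norm_div]
    congr 1
    rw [show ((k : ℂ) + 1) = ((k + 1 : ℝ) : ℂ) by push_cast; ring, Complex.norm_real,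
      Real.norm_eq_abs, abs_of_pos hk1]
  have hwhalf : ‖z / ((k : ℂ) + 1)‖ ≤ 1 / 2 := by
    rw [hw, div_le_div_iff₀ hk1 two_pos]
    linarith
  have hwlt : ‖z / ((k : ℂ) + 1)‖ < 1 := lt_of_le_of_lt hwhalf (by norm_num)
  have hbound := Complex.norm_log_one_add_sub_self_le hwlt
  rw [norm_sub_rev]
  refine le_trans hbound ?_
  have hinv : (1 - ‖z / ((k : ℂ) + 1)‖)⁻¹ ≤ 2 := by
    rw [inv_le_comm₀ (by linarith) two_pos]
    linarith
  calc ‖z / ((k : ℂ) + 1)‖ ^ 2 * (1 - ‖z / ((k : ℂ) + 1)‖)⁻¹ / 2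
      ≤ ‖z / ((k : ℂ) + 1)‖ ^ 2 * 2 / 2 := by
        have := mul_le_mul_of_nonneg_left hinv
          (by positivity : (0 : ℝ) ≤ ‖z / ((k : ℂ) + 1)‖ ^ 2)
        linarith
    _ = ‖z‖ ^ 2 / ((k : ℝ) + 1) ^ 2 := by rw [hw, div_pow]; ring

lemma ell_eq (n : ℕ) (z : ℂ) :
    ell n z = -Complex.log z
      + (∑ k ∈ Finset.range n, (z / ((k : ℂ) + 1) - Complex.log (1 + z / ((k : ℂ) + 1))))
      - z * ((∑ k ∈ Finset.range n, ((k : ℂ) + 1)⁻¹) - (Real.log n : ℂ)) := by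
  rw [Finset.sum_sub_distrib]
  unfold ell
  rw [show (∑ k ∈ Finset.range n, z / ((k : ℂ) + 1))
      = z * ∑ k ∈ Finset.range n, ((k : ℂ) + 1)⁻¹ by
    rw [Finset.mul_sum]; simp [div_eq_mul_inv]]
  ring

lemma tendsto_ell (hz : z.im ≠ 0) : Tendsto (fun n => ell n z) atTop (𝓝 (glim z)) := by
  have h1 := (summable_logterm z).hasSum.tendsto_sum_nat
  have h2 : Tendsto (fun n : ℕ => ((∑ k ∈ Finset.range n, ((k : ℂ) + 1)⁻¹) - (Real.log n : ℂ)))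
      atTop (𝓝 ((Real.eulerMascheroniConstant : ℂ))) := by
    have := tendsto_log_sub_harmonic.neg
    simp only [neg_sub, neg_neg] at this
    exact this
  have h3 := (tendsto_const_nhds (x := -Complex.log z)).add h1 |>.sub (h2.const_mul z)
  exact h3.congr fun n => (ell_eq n z).symm

lemma exp_ell (hz : z.im ≠ 0) {n : ℕ} (hn : n ≠ 0) :
    Complex.exp (ell n z) = Complex.GammaSeq z n := by
  have hz0 : z ≠ 0 := ne_zero_of_im hz
  have hnn : (n : ℂ) ≠ 0 := Nat.cast_ne_zero.mpr hn
  have hprod : ∀ k ∈ Finset.range n,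
      Complex.exp (Complex.log (1 + z / ((k : ℂ) + 1))) = 1 + z / ((k : ℂ) + 1) :=
    fun k _ => Complex.exp_log (one_add_div_ne_zero hz k)
  rw [ell, Complex.exp_sub, Complex.exp_sub, Complex.exp_sum, Finset.prod_congr rfl hprod,
    Complex.exp_log hz0]
  have hcpow : Complex.exp (z * (Real.log n : ℂ)) = (n : ℂ) ^ z := by
    rw [Complex.cpow_def_of_ne_zero hnn, Complex.natCast_log, mul_comm]
  rw [hcpow, Complex.GammaSeq, Finset.prod_range_succ']
  have hterm : ∀ k ∈ Finset.range n,
      (1 + z / ((k : ℂ) + 1)) = (z + ((k : ℂ) + 1)) / ((k : ℂ) + 1) := by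
    intro k _
    have hk : ((k : ℂ) + 1) ≠ 0 := Nat.cast_add_one_ne_zero k
    field_simp
    ring
  have hfact : (n.factorial : ℂ) = ∏ k ∈ Finset.range n, ((k : ℂ) + 1) := by
    rw [← Finset.prod_range_add_one_eq_factorial, Nat.cast_prod]
    push_cast
    rfl
  have hP : (∏ k ∈ Finset.range n, (z + ((k : ℂ) + 1))) ≠ 0 :=
    Finset.prod_ne_zero_iff.mpr fun k _ => add_nat_ne_zero hz k
  have hprodne : (∏ k ∈ Finset.range n, ((k : ℂ) + 1)) ≠ 0 :=
    Finset.prod_ne_zero_iff.mpr fun k _ => Nat.cast_add_one_ne_zero k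
  rw [Finset.prod_congr rfl hterm, Finset.prod_div_distrib, hfact]
  push_cast
  field_simp [hP, hprodne, hz0]
  ring

lemma exp_glim (hz : z.im ≠ 0) : Complex.exp (glim z) = Complex.Gamma z := by
  have h1 : Tendsto (fun n => Complex.exp (ell n z)) atTop (𝓝 (Complex.exp (glim z))) :=
    Complex.continuous_exp.continuousAt.tendsto.comp (tendsto_ell hz)
  have h2 : Tendsto (fun n => Complex.exp (ell n z)) atTop (𝓝 (Complex.Gamma z)) := by
    refine (Complex.GammaSeq_tendsto_Gamma z).congr' ?_
    filter_upwards [eventually_ne_atTop 0] with n hn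
    exact (exp_ell hz hn).symm
  exact tendsto_nhds_unique h1 h2

end DGNZ

theorem deriv_Gamma_ne_zero_of_im_ne_zero (s : ℂ) (hs : s.im ≠ 0) :
    deriv Complex.Gamma s ≠ 0 := by
  open DGNZ in
  have hδ : 0 < |s.im| / 2 := by
    have : 0 < |s.im| := abs_pos.mpr hs
    linarith
  have hUopen : IsOpen (Metric.ball s (|s.im| / 2)) := Metric.isOpen_ball
  have hsU : s ∈ Metric.ball s (|s.im| / 2) := Metric.mem_ball_self hδ
  have hmem : ∀ z ∈ Metric.ball s (|s.im| / 2), z.im ≠ 0 :=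
    fun z hzU => (mem_ball_facts hs hzU).2.2
  have hg : HasDerivAt glim (glim' s) s :=
    hasDerivAt_of_tendstoUniformlyOn hUopen (tendstoUniformlyOn_ell' hs)
      (Filter.Eventually.of_forall fun n z hzU => hasDerivAt_ell (hmem z hzU) n)
      (fun z hzU => tendsto_ell (hmem z hzU)) hsU
  have heq : Complex.Gamma =ᶠ[𝓝 s] fun z => Complex.exp (glim z) :=
    Filter.eventuallyEq_of_mem (hUopen.mem_nhds hsU) fun z hzU => (exp_glim (hmem z hzU)).symm
  have hd : deriv Complex.Gamma s = Complex.exp (glim s) * glim' s := by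
    rw [heq.deriv_eq, hg.cexp.deriv]
  rw [hd]
  refine mul_ne_zero (Complex.exp_ne_zero _) ?_
  -- compute the imaginary part of glim' s
  have hsum := summable_term hs
  have hterm_im : ∀ k : ℕ, (s / (((k : ℂ) + 1) * (s + ((k : ℂ) + 1)))).im
      = s.im * (Complex.normSq (s + ((k : ℂ) + 1)))⁻¹ := by
    intro k
    rw [term_eq hs k, Complex.sub_im, Complex.inv_im, Complex.inv_im]
    have h1 : ((k : ℂ) + 1).im = 0 := by simp
    have h2 : (s + ((k : ℂ) + 1)).im = s.im := by simp
    rw [h1, h2]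
    field_simp
    ring
  have himT : (∑' k : ℕ, s / (((k : ℂ) + 1) * (s + ((k : ℂ) + 1)))).im
      = s.im * ∑' k : ℕ, (Complex.normSq (s + ((k : ℂ) + 1)))⁻¹ := by
    have h := Complex.imCLM.map_tsum hsum
    simp only [Complex.imCLM_apply] at h
    rw [h, tsum_congr hterm_im, tsum_mul_left]
  have him : (glim' s).im
      = s.im * ((Complex.normSq s)⁻¹ + ∑' k : ℕ, (Complex.normSq (s + ((k : ℂ) + 1)))⁻¹) := by
    unfold glim'
    rw [Complex.add_im, Complex.add_im, Complex.neg_im, Complex.neg_im, Complex.ofReal_im,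
      Complex.inv_im, himT]
    field_simp
    ring
  intro hcontra
  rw [hcontra] at him
  have hpos : 0 < (Complex.normSq s)⁻¹ + ∑' k : ℕ, (Complex.normSq (s + ((k : ℂ) + 1)))⁻¹ := by
    have h1 : 0 < (Complex.normSq s)⁻¹ :=
      inv_pos.mpr (Complex.normSq_pos.mpr (ne_zero_of_im hs))
    have h2 : 0 ≤ ∑' k : ℕ, (Complex.normSq (s + ((k : ℂ) + 1)))⁻¹ :=
      tsum_nonneg fun k => inv_nonneg.mpr (Complex.normSq_nonneg _)
    linarith
  simp only [Complex.zero_im] at him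
  exact hs (by
    rcases mul_eq_zero.mp him.symm with h | h
    · exact h
    · exact absurd h hpos.ne')
end
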